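/- arXiv:1512.08628 — 2 statements merged into one kernel-verified Lean document; each statement's English description precedes it below -/
import Mathlib

section
/- Let X be a Banach space and Y ⊆ X a closed subspace containing no isomorphic copy of ℓ₁. If the quotient X/Y is weakly precompactly generated, then X is weakly precompactly generated. -/
open Filter Topology Set

section Defs

variable {E : Type*} [NormedAddCommGroup E] [NormedSpace ℝ E]

/-- A set is weakly compact if it is compact in the weak topology. -/
def WeaklyCompact (K : Set E) : Prop := IsCompact (toWeakSpace ℝ E '' K)

/-- A set is weakly precompact if every sequence in it has a weakly Cauchy subsequence. -/
def WeaklyPrecompact (K : Set E) : Prop :=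
  ∀ x : ℕ → E, (∀ n, x n ∈ K) → ∃ φ : ℕ → ℕ, StrictMono φ ∧
    ∀ f : E →L[ℝ] ℝ, ∃ l : ℝ, Tendsto (fun n => f (x (φ n))) atTop (𝓝 l)

end Defs

section LatDefs

variable {E : Type*} [NormedAddCommGroup E] [Lattice E] [NormedSpace ℝ E]

/-- A closed sublattice: a closed linear subspace closed under `⊔` and `⊓`. -/
def IsClosedSublattice (S : Set E) : Prop :=
  IsClosed S ∧ (0 : E) ∈ S ∧ (∀ x ∈ S, ∀ y ∈ S, x + y ∈ S) ∧
    (∀ c : ℝ, ∀ x ∈ S, c • x ∈ S) ∧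
    (∀ x ∈ S, ∀ y ∈ S, x ⊔ y ∈ S) ∧ (∀ x ∈ S, ∀ y ∈ S, x ⊓ y ∈ S)

/-- `L(A)`: the smallest closed sublattice containing `A`. -/
def sublatticeGen (A : Set E) : Set E := ⋂₀ {S | IsClosedSublattice S ∧ A ⊆ S}

/-- The solid hull of a set. -/
def solidHull (A : Set E) : Set E := ⋃ x ∈ A, Set.Icc (-|x|) |x|

/-- A closed ideal: a closed linear subspace which is solid. -/
def IsClosedIdeal (S : Set E) : Prop :=
  IsClosed S ∧ (0 : E) ∈ S ∧ (∀ x ∈ S, ∀ y ∈ S, x + y ∈ S) ∧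
    (∀ c : ℝ, ∀ x ∈ S, c • x ∈ S) ∧
    (∀ x : E, ∀ y ∈ S, |x| ≤ |y| → x ∈ S)

/-- `I(A)`: the smallest closed ideal containing `A`. -/
def idealGen (A : Set E) : Set E := ⋂₀ {S | IsClosedIdeal S ∧ A ⊆ S}

/-- A band: a closed ideal closed under existing suprema. -/
def IsBand (S : Set E) : Prop :=
  IsClosedIdeal S ∧ ∀ D ⊆ S, ∀ x : E, IsLUB D x → x ∈ S

/-- `B(A)`: the smallest band containing `A`. -/
def bandGen (A : Set E) : Set E := ⋂₀ {S | IsBand S ∧ A ⊆ S}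

/-- Disjoint complement of a set. -/
def disjComplement (A : Set E) : Set E := {x : E | ∀ y ∈ A, |x| ⊓ |y| = 0}

end LatDefs

/-- Order continuity of the norm: every downward directed set with infimum `0`
has norms converging to `0` along the order. -/
def OrderContinuousBL (E : Type*) [NormedAddCommGroup E] [Lattice E] : Prop :=
  ∀ D : Set E, D.Nonempty → DirectedOn (· ≥ ·) D → IsGLB D 0 →
    ∀ ε > 0, ∃ d ∈ D, ∀ e ∈ D, e ≤ d → ‖e‖ < ε

/-- Density character of a topological space. -/
noncomputable def densChar (T : Type*) [TopologicalSpace T] : Cardinal :=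
  sInf {c : Cardinal | ∃ s : Set T, Dense s ∧ Cardinal.mk s = c}

namespace WPG18

section Combinatorics

variable {S : Type*} (A B : ℕ → Set S)

/-- `x` hits both `A n` and `B n` infinitely often along `M`. -/
def Rich (x : S) (M : Set ℕ) : Prop :=
  {n | n ∈ M ∧ x ∈ A n}.Infinite ∧ {n | n ∈ M ∧ x ∈ B n}.Infinite

/-- Every infinite subset of `M` admits a rich point in `C`. -/
def Large (C : Set S) (M : Set ℕ) : Prop :=
  ∀ M' : Set ℕ, M' ⊆ M → M'.Infinite → ∃ x ∈ C, Rich A B x M'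

variable {A B}

lemma Rich.of_diff {x : S} {M M' F : Set ℕ} (hF : F.Finite)
    (h : Rich A B x M) (hsub : M \ F ⊆ M') : Rich A B x M' := by
  obtain ⟨h1, h2⟩ := h
  constructor
  · exact ((h1.diff hF).mono (fun n hn => ⟨hsub ⟨hn.1.1, hn.2⟩, hn.1.2⟩))
  · exact ((h2.diff hF).mono (fun n hn => ⟨hsub ⟨hn.1.1, hn.2⟩, hn.1.2⟩))

lemma not_large {D : Set S} {M' : Set ℕ} (h : ¬ Large A B D M') :
    ∃ M'', M'' ⊆ M' ∧ M''.Infinite ∧ ∀ x ∈ D, ¬ Rich A B x M'' := by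
  unfold Large at h; push_neg at h; exact h

lemma large_step {ι : Type} [Finite ι] [Nonempty ι] (C : ι → Set S) (M : Set ℕ)
    (hM : M.Infinite) (hC : ∀ i, Large A B (C i) M) (N₀ : ℕ) :
    ∃ n ∈ M, N₀ ≤ n ∧ ∃ M' : Set ℕ, M' ⊆ M ∧ M'.Infinite ∧
      (∀ i, Large A B (C i ∩ A n) M') ∧ (∀ i, Large A B (C i ∩ B n) M') := by
  by_contra hcon
  push_neg at hcon
  -- key extraction
  have key : ∀ n ∈ M, N₀ ≤ n → ∀ M' : Set ℕ, M' ⊆ M → M'.Infinite →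
      ∃ (i : ι) (s : Bool) (M'' : Set ℕ), M'' ⊆ M' ∧ M''.Infinite ∧
        ∀ x, x ∈ C i → x ∈ (if s then A n else B n) → ¬ Rich A B x M'' := by
    intro n hn hN M' hsub hinf
    by_cases hA : ∀ i, Large A B (C i ∩ A n) M'
    · obtain ⟨i, hi⟩ := hcon n hn hN M' hsub hinf hA
      obtain ⟨M'', h1, h2, h3⟩ := not_large hi
      exact ⟨i, false, M'', h1, h2, fun x hx1 hx2 => h3 x ⟨hx1, by simpa using hx2⟩⟩
    · push_neg at hA
      obtain ⟨i, hi⟩ := hA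
      obtain ⟨M'', h1, h2, h3⟩ := not_large hi
      exact ⟨i, true, M'', h1, h2, fun x hx1 hx2 => h3 x ⟨hx1, by simpa using hx2⟩⟩
  -- recursion
  have hstep : ∀ st : {p : ℕ × Set ℕ // p.1 ∈ p.2 ∧ p.2 ⊆ M ∧ p.2.Infinite ∧ N₀ ≤ p.1},
      ∃ st' : {p : ℕ × Set ℕ // p.1 ∈ p.2 ∧ p.2 ⊆ M ∧ p.2.Infinite ∧ N₀ ≤ p.1},
        ∃ (i : ι) (s : Bool),
          st'.1.2 ⊆ st.1.2 ∧ st.1.1 < st'.1.1 ∧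
          ∀ x, x ∈ C i → x ∈ (if s then A st.1.1 else B st.1.1) → ¬ Rich A B x st'.1.2 := by
    rintro ⟨⟨n, M'⟩, hnM', hsub, hinf, hN⟩
    obtain ⟨i, s, M'', h1, h2, h3⟩ := key n (hsub hnM') hN M' hsub hinf
    obtain ⟨n', hn'M'', hn'⟩ := h2.exists_gt n
    exact ⟨⟨⟨n', M''⟩, hn'M'', h1.trans hsub, h2, le_trans hN hn'.le⟩, i, s, h1, hn', h3⟩
  choose stepf si ss hsub2 hlt hkill using hstep
  obtain ⟨n₀, hn₀M, hn₀⟩ := hM.exists_gt N₀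
  set st0 : {p : ℕ × Set ℕ // p.1 ∈ p.2 ∧ p.2 ⊆ M ∧ p.2.Infinite ∧ N₀ ≤ p.1} :=
    ⟨⟨n₀, M⟩, hn₀M, subset_rfl, hM, hn₀.le⟩ with hst0
  set f := fun k => stepf^[k] st0 with hfdef
  have hf : ∀ k, f (k+1) = stepf (f k) := fun k => Function.iterate_succ_apply' stepf k st0
  set nn := fun k => (f k).1.1 with hnn
  set MM := fun k => (f k).1.2 with hMM
  have hmono : StrictMono nn := by
    apply strictMono_nat_of_lt_succ
    intro k
    have := hlt (f k); rw [← hf k] at this; exact this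
  have hchain : ∀ j k, k ≤ j → MM j ⊆ MM k := by
    intro j
    induction j with
    | zero => intro k hk; rw [Nat.le_zero.mp hk]
    | succ j ih =>
      intro k hk
      rcases Nat.lt_or_ge k (j+1) with h | h
      · have h1 : MM (j+1) ⊆ MM j := by
          have := hsub2 (f j); rw [← hf j] at this; exact this
        exact h1.trans (ih k (Nat.lt_succ_iff.mp h))
      · rw [Nat.le_antisymm hk h]
  have hmemM : ∀ k, nn k ∈ MM k := fun k => (f k).2.1
  have hMMM : ∀ k, MM k ⊆ M := fun k => (f k).2.2.1
  -- pigeonhole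
  set col : ℕ → ι × Bool := fun k => (si (f k), ss (f k)) with hcol
  obtain ⟨⟨i, s⟩, hfib⟩ := Finite.exists_infinite_fiber col
  have hT : (col ⁻¹' {(i, s)}).Infinite := Set.infinite_coe_iff.mp hfib
  set T := col ⁻¹' {(i, s)} with hTdef
  set P := nn '' T with hP
  have hPM : P ⊆ M := by rintro _ ⟨k, _, rfl⟩; exact hMMM k (hmemM k)
  have hPinf : P.Infinite := hT.image (hmono.injective.injOn)
  obtain ⟨x, hxC, hxRich⟩ := hC i P hPM hPinf
  -- find k ∈ T with x ∈ (if s then A (nn k) else B (nn k))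
  have hside : {n | n ∈ P ∧ x ∈ (if s then A n else B n)}.Infinite := by
    cases s
    · simpa using hxRich.2
    · simpa using hxRich.1
  obtain ⟨n, hnP, hnside⟩ := hside.nonempty
  obtain ⟨k, hkT, rfl⟩ := hnP
  -- kill
  have hkill' : ¬ Rich A B x (MM (k+1)) := by
    have h1 := hkill (f k)
    rw [← hf k] at h1
    have h2 : si (f k) = i := congrArg Prod.fst (show col k = (i,s) from hkT)
    have h3 : ss (f k) = s := congrArg Prod.snd (show col k = (i,s) from hkT)
    rw [h2, h3] at h1
    exact h1 x hxC hnside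
  -- but x is rich in MM (k+1)
  apply hkill'
  refine Rich.of_diff ((Set.finite_Iic k).image nn) hxRich ?_
  rintro n ⟨⟨j, hjT, rfl⟩, hnotin⟩
  have hjk : k < j := by
    by_contra h
    exact hnotin ⟨j, by simpa using Nat.le_of_not_lt h, rfl⟩
  exact hchain j (k+1) hjk (hmemM j)

variable (A B)

def Dk (l : ℕ → ℕ) (σ : ℕ → Bool) (k : ℕ) : Set S :=
  ⋂ i ∈ Finset.range k, (if σ i then A (l i) else B (l i))

variable {A B}

lemma Dk_succ (l : ℕ → ℕ) (σ : ℕ → Bool) (k : ℕ) :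
    Dk A B l σ (k+1) = Dk A B l σ k ∩ (if σ k then A (l k) else B (l k)) := by
  unfold Dk
  rw [Finset.range_add_one]
  rw [Finset.set_biInter_insert]
  exact Set.inter_comm _ _

lemma Dk_congr {l l' : ℕ → ℕ} {σ σ' : ℕ → Bool} (k : ℕ)
    (hl : ∀ i < k, l i = l' i) (hσ : ∀ i < k, σ i = σ' i) :
    Dk A B l σ k = Dk A B l' σ' k := by
  unfold Dk
  apply Set.iInter₂_congr
  intro i hi
  have hi' := Finset.mem_range.mp hi
  rw [hl i hi', hσ i hi']

lemma exists_indep (M : Set ℕ) (hM : M.Infinite) (hL : Large A B univ M) :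
    ∃ l : ℕ → ℕ, StrictMono l ∧ (∀ k, l k ∈ M) ∧
      ∀ F G : Finset ℕ, Disjoint F G →
        ∃ x, (∀ k ∈ F, x ∈ A (l k)) ∧ (∀ k ∈ G, x ∈ B (l k)) := by
  classical
  set Inv : ℕ → (ℕ → ℕ) × Set ℕ → Prop := fun k st =>
    st.2 ⊆ M ∧ st.2.Infinite ∧ (∀ σ : ℕ → Bool, Large A B (Dk A B st.1 σ k) st.2) ∧
    (∀ i < k, st.1 i ∈ M) ∧ (∀ i j, i < j → j < k → st.1 i < st.1 j) with hInv
  have hstep : ∀ (k : ℕ) (st : (ℕ → ℕ) × Set ℕ), Inv k st →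
      ∃ st', Inv (k+1) st' ∧ (∀ i, i ≠ k → st'.1 i = st.1 i) ∧ st'.2 ⊆ st.2 ∧ st'.1 k ∈ M := by
    intro k st hst
    obtain ⟨hsubM, hinf, hlarge, hmem, hmono⟩ := hst
    set N₀ := (Finset.range k).sup st.1 + 1 with hN₀
    set ext : (Fin k → Bool) → (ℕ → Bool) := fun τ i => if h : i < k then τ ⟨i, h⟩ else false
      with hext
    set C : (Fin k → Bool) → Set S := fun τ => Dk A B st.1 (ext τ) k with hCdef
    have hC : ∀ τ, Large A B (C τ) st.2 := fun τ => hlarge (ext τ)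
    obtain ⟨n, hnst, hNn, M', hM'sub, hM'inf, hLA, hLB⟩ :=
      large_step C st.2 hinf hC N₀
    refine ⟨⟨fun i => if i = k then n else st.1 i, M'⟩, ?_, ?_, hM'sub, ?_⟩
    · refine ⟨hM'sub.trans hsubM, hM'inf, ?_, ?_, ?_⟩
      · intro σ
        have heq : Dk A B (fun i => if i = k then n else st.1 i) σ (k+1)
            = C (fun i : Fin k => σ i) ∩ (if σ k then A n else B n) := by
          rw [Dk_succ]
          have h1 : Dk A B (fun i => if i = k then n else st.1 i) σ k
              = C (fun i : Fin k => σ i) := by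
            rw [hCdef]
            apply Dk_congr
            · intro i hi; simp [Nat.ne_of_lt hi]
            · intro i hi; simp [hext, hi]
          rw [h1]
          congr 1
          simp
        rw [heq]
        cases hσk : σ k
        · simpa [hσk] using hLB (fun i : Fin k => σ i)
        · simpa [hσk] using hLA (fun i : Fin k => σ i)
      · intro i hi
        rcases Nat.lt_succ_iff_lt_or_eq.mp hi with h | h
        · simpa [Nat.ne_of_lt h] using hmem i h
        · show (if i = k then n else st.1 i) ∈ M
          rw [h, if_pos rfl]; exact hsubM hnst
      · intro i j hij hj
        rcases Nat.lt_succ_iff_lt_or_eq.mp hj with h | h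
        · simpa [Nat.ne_of_lt h, Nat.ne_of_lt (hij.trans h)] using hmono i j hij h
        · have hik : i ≠ k := by omega
          show (if i = k then n else st.1 i) < (if j = k then n else st.1 j)
          rw [if_neg hik, if_pos h]
          have hile : st.1 i ≤ (Finset.range k).sup st.1 :=
            Finset.le_sup (Finset.mem_range.mpr (h ▸ hij))
          omega
    · intro i hi; simp [hi]
    · simpa using hsubM hnst
  -- recursion along k
  choose stepf hI hA hS hMm using hstep
  have hInv0 : Inv 0 ((fun _ => 0 : ℕ → ℕ), M) := by
    refine ⟨subset_rfl, hM, ?_, ?_, ?_⟩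
    · intro σ
      have : Dk A B (fun _ => 0) σ 0 = univ := by simp [Dk]
      rw [this]; exact hL
    · intro i hi; omega
    · intro i j hij hj; omega
  let g : (k : ℕ) → {st : (ℕ → ℕ) × Set ℕ // Inv k st} := fun k =>
    Nat.rec ⟨((fun _ => 0 : ℕ → ℕ), M), hInv0⟩
      (fun k ih => ⟨stepf k ih.1 ih.2, hI k ih.1 ih.2⟩) k
  set l : ℕ → ℕ := fun k => (g (k+1)).1.1 k with hl
  have hagree : ∀ i m, i < m → (g m).1.1 i = l i := by
    intro i m
    induction m with
    | zero => omega
    | succ m ih =>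
      intro him
      rcases Nat.lt_succ_iff_lt_or_eq.mp him with h | h
      · have e1 : (g (m+1)).1.1 i = (g m).1.1 i := hA m (g m).1 (g m).2 i (by omega)
        exact e1.trans (ih h)
      · subst h; rfl
  have hlmono : StrictMono l := by
    intro i j hij
    have e1 : (g (j+1)).1.1 i = l i := hagree i (j+1) (by omega)
    have e2 : (g (j+1)).1.1 j = l j := rfl
    have := (g (j+1)).2.2.2.2.2 i j hij (by omega)
    rw [e1, e2] at this
    exact this
  have hlM : ∀ k, l k ∈ M := by
    intro k
    exact (g (k+1)).2.2.2.2.1 k (by omega)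
  refine ⟨l, hlmono, hlM, ?_⟩
  intro F G hFG
  classical
  set k := (F ∪ G).sup id + 1 with hk
  have hFk : ∀ i ∈ F, i < k := by
    intro i hi
    have : id i ≤ (F ∪ G).sup id := Finset.le_sup (Finset.mem_union_left _ hi)
    simpa [hk] using Nat.lt_succ_of_le this
  have hGk : ∀ i ∈ G, i < k := by
    intro i hi
    have : id i ≤ (F ∪ G).sup id := Finset.le_sup (Finset.mem_union_right _ hi)
    simpa [hk] using Nat.lt_succ_of_le this
  obtain ⟨_, hinf, hlarge, _, _⟩ := (g k).2
  set σ : ℕ → Bool := fun i => decide (i ∈ F) with hσ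
  obtain ⟨x, hxD, -⟩ := hlarge σ (g k).1.2 subset_rfl hinf
  have hxD' : x ∈ Dk A B l σ k := by
    rw [Dk_congr (A := A) (B := B) k (fun i hi => hagree i k hi) (fun i _ => rfl)] at hxD
    exact hxD
  refine ⟨x, ?_, ?_⟩
  · intro i hi
    have hm := Set.mem_iInter₂.mp hxD' i (Finset.mem_range.mpr (hFk i hi))
    have hσi : σ i = true := by simp [hσ, hi]
    rwa [hσi, if_pos rfl] at hm
  · intro i hi
    have hm := Set.mem_iInter₂.mp hxD' i (Finset.mem_range.mpr (hGk i hi))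
    have hσi : σ i = false := by simp [hσ, Finset.disjoint_right.mp hFG hi]
    rwa [hσi] at hm
    

lemma dichotomy (M : Set ℕ) (hM : M.Infinite) :
    (∃ l : ℕ → ℕ, StrictMono l ∧ (∀ k, l k ∈ M) ∧
      ∀ F G : Finset ℕ, Disjoint F G →
        ∃ x, (∀ k ∈ F, x ∈ A (l k)) ∧ (∀ k ∈ G, x ∈ B (l k))) ∨
    (∃ M' : Set ℕ, M' ⊆ M ∧ M'.Infinite ∧ ∀ x : S, ¬ Rich A B x M') := by
  by_cases h : Large A B univ M
  · exact Or.inl (exists_indep M hM h)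
  · right
    unfold Large at h
    push_neg at h
    obtain ⟨M', h1, h2, h3⟩ := h
    exact ⟨M', h1, h2, fun x => h3 x (mem_univ x)⟩


end Combinatorics

section Banach

variable {X : Type*} [NormedAddCommGroup X] [NormedSpace ℝ X]

def Aset (x : ℕ → X) (r : ℝ) : ℕ → Set (X →L[ℝ] ℝ) := fun n => {f | ‖f‖ ≤ 1 ∧ f (x n) ≤ r}
def Bset (x : ℕ → X) (s : ℝ) : ℕ → Set (X →L[ℝ] ℝ) := fun n => {f | ‖f‖ ≤ 1 ∧ s ≤ f (x n)}

lemma indep_ell1 {x : ℕ → X} {r s : ℝ} (hrs : r < s) {l : ℕ → ℕ}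
    (hind : ∀ F G : Finset ℕ, Disjoint F G →
      ∃ f, (∀ k ∈ F, f ∈ Aset x r (l k)) ∧ (∀ k ∈ G, f ∈ Bset x s (l k))) :
    ∀ (N : ℕ) (a : ℕ → ℝ), ((s - r)/2) * ∑ k ∈ Finset.range N, |a k| ≤
      ‖∑ k ∈ Finset.range N, a k • x (l k)‖ := by
  intro N a
  classical
  rcases Nat.eq_zero_or_pos N with hN | hN
  · subst hN; simp
  set F := (Finset.range N).filter (fun k => a k < 0) with hF
  set G := (Finset.range N).filter (fun k => 0 ≤ a k) with hG
  have hdisj : Disjoint F G := by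
    rw [Finset.disjoint_left]
    intro k hk1 hk2
    have := (Finset.mem_filter.mp hk1).2
    have := (Finset.mem_filter.mp hk2).2
    linarith
  obtain ⟨f, hfA, hfB⟩ := hind F G hdisj
  obtain ⟨g, hgA, hgB⟩ := hind G F hdisj.symm
  have h0 : (0 : ℕ) ∈ Finset.range N := Finset.mem_range.mpr hN
  have hnorms : ‖f‖ ≤ 1 ∧ ‖g‖ ≤ 1 := by
    rcases le_or_gt 0 (a 0) with h | h
    · have hkG : 0 ∈ G := Finset.mem_filter.mpr ⟨h0, h⟩
      exact ⟨(hfB 0 hkG).1, (hgA 0 hkG).1⟩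
    · have hkF : 0 ∈ F := Finset.mem_filter.mpr ⟨h0, h⟩
      exact ⟨(hfA 0 hkF).1, (hgB 0 hkF).1⟩
  have key : ∀ k ∈ Finset.range N, (s - r) * |a k| ≤ a k * ((f - g) (x (l k))) := by
    intro k hk
    rcases le_or_gt 0 (a k) with h | h
    · have hkG : k ∈ G := Finset.mem_filter.mpr ⟨hk, h⟩
      have h1 : s ≤ f (x (l k)) := (hfB k hkG).2
      have h2 : g (x (l k)) ≤ r := (hgA k hkG).2
      rw [ContinuousLinearMap.sub_apply, abs_of_nonneg h]
      nlinarith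
    · have hkF : k ∈ F := Finset.mem_filter.mpr ⟨hk, h⟩
      have h1 : f (x (l k)) ≤ r := (hfA k hkF).2
      have h2 : s ≤ g (x (l k)) := (hgB k hkF).2
      rw [ContinuousLinearMap.sub_apply, abs_of_neg h]
      nlinarith
  have hsum : (s - r) * ∑ k ∈ Finset.range N, |a k| ≤
      (f - g) (∑ k ∈ Finset.range N, a k • x (l k)) := by
    rw [Finset.mul_sum, map_sum]
    apply Finset.sum_le_sum
    intro k hk
    rw [map_smul]
    exact key k hk
  have hnorm : (f - g) (∑ k ∈ Finset.range N, a k • x (l k)) ≤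
      2 * ‖∑ k ∈ Finset.range N, a k • x (l k)‖ := by
    have h1 := (f - g).le_opNorm (∑ k ∈ Finset.range N, a k • x (l k))
    have h2 : ‖f - g‖ ≤ 2 := by
      have h3 := norm_sub_le f g
      linarith [hnorms.1, hnorms.2]
    have h4 := le_abs_self ((f - g) (∑ k ∈ Finset.range N, a k • x (l k)))
    rw [Real.norm_eq_abs] at h1
    nlinarith [norm_nonneg (∑ k ∈ Finset.range N, a k • x (l k))]
  linarith


theorem rosenthal (x : ℕ → X) (C : ℝ) (hb : ∀ n, ‖x n‖ ≤ C) :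
    (∃ φ : ℕ → ℕ, StrictMono φ ∧ ∀ f : X →L[ℝ] ℝ, ∃ l : ℝ,
        Tendsto (fun n => f (x (φ n))) atTop (𝓝 l)) ∨
    (∃ (φ : ℕ → ℕ) (c : ℝ), StrictMono φ ∧ 0 < c ∧ ∀ (N : ℕ) (a : ℕ → ℝ),
        c * ∑ k ∈ Finset.range N, |a k| ≤ ‖∑ k ∈ Finset.range N, a k • x (φ k)‖) := by
  by_cases hr : ∃ (φ : ℕ → ℕ) (c : ℝ), StrictMono φ ∧ 0 < c ∧ ∀ (N : ℕ) (a : ℕ → ℝ),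
      c * ∑ k ∈ Finset.range N, |a k| ≤ ‖∑ k ∈ Finset.range N, a k • x (φ k)‖
  · exact Or.inr hr
  left
  have hnoind : ∀ (r s : ℝ), r < s → ∀ M : Set ℕ, M.Infinite →
      ∃ M' : Set ℕ, M' ⊆ M ∧ M'.Infinite ∧
        ∀ f : X →L[ℝ] ℝ, ¬ Rich (Aset x r) (Bset x s) f M' := by
    intro r s hrs M hM
    rcases dichotomy (A := Aset x r) (B := Bset x s) M hM with ⟨l, hmono, _, hind⟩ | h
    · exact absurd ⟨l, (s-r)/2, hmono, by linarith, indep_ell1 hrs hind⟩ hr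
    · exact h
  obtain ⟨e⟩ : Nonempty (ℕ ≃ ℚ × ℚ) := ⟨(Denumerable.eqv (ℚ × ℚ)).symm⟩
  have hshrink : ∀ (k : ℕ) (Mk : Set ℕ), Mk.Infinite → ∃ M' : Set ℕ,
      M' ⊆ Mk ∧ M'.Infinite ∧ (((e k).1 : ℝ) < ((e k).2 : ℝ) →
        ∀ f : X →L[ℝ] ℝ, ¬ Rich (Aset x ((e k).1 : ℝ)) (Bset x ((e k).2 : ℝ)) f M') := by
    intro k Mk hMk
    by_cases hrs : ((e k).1 : ℝ) < ((e k).2 : ℝ)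
    · obtain ⟨M', h1, h2, h3⟩ := hnoind _ _ hrs Mk hMk
      exact ⟨M', h1, h2, fun _ => h3⟩
    · exact ⟨Mk, subset_rfl, hMk, fun h => absurd h hrs⟩
  choose sh hsh1 hsh2 hsh3 using hshrink
  let MS : ℕ → {M : Set ℕ // M.Infinite} := fun k =>
    Nat.rec ⟨univ, infinite_univ⟩ (fun k ih => ⟨sh k ih.1 ih.2, hsh2 k ih.1 ih.2⟩) k
  have hMSsub : ∀ k, (MS (k+1)).1 ⊆ (MS k).1 := fun k => hsh1 k (MS k).1 (MS k).2
  have hchain : ∀ j k, k ≤ j → (MS j).1 ⊆ (MS k).1 := by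
    intro j
    induction j with
    | zero => intro k hk; rw [Nat.le_zero.mp hk]
    | succ j ih =>
      intro k hk
      rcases Nat.lt_or_ge k (j+1) with h | h
      · exact (hMSsub j).trans (ih k (Nat.lt_succ_iff.mp h))
      · rw [Nat.le_antisymm hk h]
  -- diagonal
  obtain ⟨m, hmmono, hmmem⟩ : ∃ m : ℕ → ℕ, StrictMono m ∧ ∀ k, m k ∈ (MS k).1 := by
    have h := fun k (n : ℕ) => ((MS k).2).exists_gt n
    choose g hg1 hg2 using h
    refine ⟨fun k => Nat.rec (g 0 0) (fun k mk => g (k+1) mk) k, ?_, ?_⟩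
    · apply strictMono_nat_of_lt_succ
      intro k
      exact hg2 _ _
    · intro k
      cases k with
      | zero => exact hg1 0 0
      | succ k => exact hg1 (k+1) (Nat.rec (g 0 0) (fun k mk => g (k+1) mk) k)
  have hmem2 : ∀ k j, k ≤ j → m j ∈ (MS k).1 := fun k j hkj => hchain j k hkj (hmmem j)
  refine ⟨m, hmmono, ?_⟩
  have hC : 0 ≤ C := le_trans (norm_nonneg _) (hb 0)
  have hball : ∀ f : X →L[ℝ] ℝ, ‖f‖ ≤ 1 →
      ∃ l : ℝ, Tendsto (fun n => f (x (m n))) atTop (𝓝 l) := by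
    intro f hf
    set t : ℕ → ℝ := fun n => f (x (m n)) with ht
    have hCb : ∀ n, |t n| ≤ C := by
      intro n
      have := f.le_opNorm (x (m n))
      rw [Real.norm_eq_abs] at this
      nlinarith [hb (m n), norm_nonneg (x (m n)), f.opNorm_nonneg]
    have hbddA : IsBoundedUnder (· ≤ ·) atTop t :=
      isBoundedUnder_of ⟨C, fun n => (abs_le.mp (hCb n)).2⟩
    have hbddB : IsBoundedUnder (· ≥ ·) atTop t :=
      isBoundedUnder_of ⟨-C, fun n => (abs_le.mp (hCb n)).1⟩
    have heq : liminf t atTop = limsup t atTop := by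
      by_contra hne
      have hlt : liminf t atTop < limsup t atTop :=
        lt_of_le_of_ne (liminf_le_limsup hbddA hbddB) hne
      obtain ⟨r, hr1, hr2⟩ := exists_rat_btwn hlt
      obtain ⟨s2, hs1, hs2⟩ := exists_rat_btwn hr2
      set k₀ := e.symm (r, s2) with hk₀
      have hek : e k₀ = (r, s2) := e.apply_symm_apply _
      have hnorich := hsh3 k₀ (MS k₀).1 (MS k₀).2
      rw [hek] at hnorich
      have hnorich2 : ∀ g : X →L[ℝ] ℝ,
          ¬ Rich (Aset x (r : ℝ)) (Bset x (s2 : ℝ)) g (MS (k₀+1)).1 := hnorich hs1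
      apply hnorich2 f
      have build : ∀ (Q : ℕ → Set (X →L[ℝ] ℝ)), {j | f ∈ Q (m j)}.Infinite →
          {n | n ∈ (MS (k₀+1)).1 ∧ f ∈ Q n}.Infinite := by
        intro Q hQ
        have hsub : m '' ({j | f ∈ Q (m j)} \ Iio (k₀+1)) ⊆
            {n | n ∈ (MS (k₀+1)).1 ∧ f ∈ Q n} := by
          rintro _ ⟨j, ⟨hj1, hj2⟩, rfl⟩
          exact ⟨hmem2 (k₀+1) j (not_lt.mp (fun hc => hj2 hc)), hj1⟩
        exact (((hQ.diff (finite_Iio _)).image (hmmono.injective.injOn)).mono hsub)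
      constructor
      · apply build
        have hfreq : ∃ᶠ j in atTop, t j < (r : ℝ) :=
          frequently_lt_of_liminf_lt (hbddA.isCoboundedUnder_ge) hr1
        have hinf : {j | t j < (r : ℝ)}.Infinite :=
          Nat.frequently_atTop_iff_infinite.mp hfreq
        exact hinf.mono (fun j hj => ⟨hf, le_of_lt hj⟩)
      · apply build
        have hfreq : ∃ᶠ j in atTop, (s2 : ℝ) < t j :=
          frequently_lt_of_lt_limsup (hbddB.isCoboundedUnder_le) hs2
        have hinf : {j | (s2 : ℝ) < t j}.Infinite :=
          Nat.frequently_atTop_iff_infinite.mp hfreq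
        exact hinf.mono (fun j hj => ⟨hf, le_of_lt hj⟩)
    exact ⟨liminf t atTop, tendsto_of_liminf_eq_limsup rfl heq.symm hbddA hbddB⟩
  intro f
  by_cases hf0 : f = 0
  · exact ⟨0, by simp [hf0, tendsto_const_nhds]⟩
  · have hfn : ‖f‖ ≠ 0 := norm_ne_zero_iff.mpr hf0
    set g : X →L[ℝ] ℝ := ‖f‖⁻¹ • f with hg
    have hg1 : ‖g‖ ≤ 1 := by
      have h1 : ‖g‖ = ‖(‖f‖⁻¹)‖ * ‖f‖ := by rw [hg]; exact norm_smul _ f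
      rw [h1, norm_inv, norm_norm, inv_mul_cancel₀ hfn]
    obtain ⟨l, hl⟩ := hball g hg1
    refine ⟨‖f‖ * l, ?_⟩
    have h2 : ∀ n, f (x (m n)) = ‖f‖ * g (x (m n)) := by
      intro n
      rw [hg]
      simp [ContinuousLinearMap.smul_apply, mul_inv_cancel_left₀ hfn]
    simpa only [h2] using hl.const_mul ‖f‖
  
end Banach

section Embedding

variable {W : Type*} [NormedAddCommGroup W] [NormedSpace ℝ W] [CompleteSpace W]


lemma lp_one_hasSum_norm (v : lp (fun _ : ℕ => ℝ) 1) :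
    HasSum (fun k => ‖v k‖) ‖v‖ := by
  have h := lp.hasSum_norm (p := 1) (by norm_num) v
  simpa using h

lemma ell1_embedding (y : ℕ → W) (C c : ℝ) (hc : 0 < c) (hb : ∀ n, ‖y n‖ ≤ C)
    (hl : ∀ (N : ℕ) (a : ℕ → ℝ),
      c * ∑ k ∈ Finset.range N, |a k| ≤ ‖∑ k ∈ Finset.range N, a k • y k‖) :
    ∃ e : (lp (fun _ : ℕ => ℝ) 1) →L[ℝ] W, ∀ v, c * ‖v‖ ≤ ‖e v‖ := by
  have hC : 0 ≤ C := le_trans (norm_nonneg _) (hb 0)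
  have hsummable : ∀ v : lp (fun _ : ℕ => ℝ) 1, Summable (fun k => (v k) • y k) := by
    intro v
    apply Summable.of_norm_bounded (g := fun k => C * ‖v k‖)
    · exact ((lp_one_hasSum_norm v).summable).mul_left C
    · intro k
      rw [norm_smul]
      exact mul_le_mul_of_nonneg_left (hb k) (norm_nonneg _) |>.trans_eq (mul_comm _ _) |>.trans_eq rfl
  set E : (lp (fun _ : ℕ => ℝ) 1) → W := fun v => ∑' k, (v k) • y k with hE
  have hEadd : ∀ v w, E (v + w) = E v + E w := by
    intro v w
    rw [hE]
    simp only [lp.coeFn_add, Pi.add_apply]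
    have : (fun k => (v k + w k) • y k) = fun k => (v k) • y k + (w k) • y k := by
      funext k; rw [add_smul]
    rw [this]
    exact Summable.tsum_add (hsummable v) (hsummable w)
  have hEsmul : ∀ (r : ℝ) v, E (r • v) = r • E v := by
    intro r v
    rw [hE]
    simp only [lp.coeFn_smul, Pi.smul_apply, smul_eq_mul]
    have : (fun k => (r * v k) • y k) = fun k => r • ((v k) • y k) := by
      funext k; rw [mul_smul]
    rw [this]
    exact Summable.tsum_const_smul r (hsummable v)
  set El : (lp (fun _ : ℕ => ℝ) 1) →ₗ[ℝ] W :=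
    { toFun := E, map_add' := hEadd, map_smul' := hEsmul } with hEl
  have hnsum : ∀ v : lp (fun _ : ℕ => ℝ) 1, Summable (fun k => ‖(v k) • y k‖) := by
    intro v
    refine Summable.of_nonneg_of_le (fun k => norm_nonneg _) ?_
      (((lp_one_hasSum_norm v).summable).mul_left C)
    intro k
    rw [norm_smul]
    calc ‖(v k : ℝ)‖ * ‖y k‖ ≤ ‖(v k : ℝ)‖ * C :=
          mul_le_mul_of_nonneg_left (hb k) (norm_nonneg _)
      _ = C * ‖(v k : ℝ)‖ := mul_comm _ _
  have hbound : ∀ v, ‖El v‖ ≤ C * ‖v‖ := by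
    intro v
    have h1 : ‖E v‖ ≤ ∑' k, ‖(v k) • y k‖ := norm_tsum_le_tsum_norm (hnsum v)
    have h2 : ∑' k, ‖(v k) • y k‖ ≤ ∑' k, C * ‖(v k : ℝ)‖ := by
      apply Summable.tsum_le_tsum _ (hnsum v) (((lp_one_hasSum_norm v).summable).mul_left C)
      intro k
      rw [norm_smul]
      calc ‖(v k : ℝ)‖ * ‖y k‖ ≤ ‖(v k : ℝ)‖ * C :=
            mul_le_mul_of_nonneg_left (hb k) (norm_nonneg _)
        _ = C * ‖(v k : ℝ)‖ := mul_comm _ _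
    have h3 : ∑' k, C * ‖(v k : ℝ)‖ = C * ‖v‖ := by
      rw [tsum_mul_left, (lp_one_hasSum_norm v).tsum_eq]
    exact le_trans h1 (le_trans h2 (le_of_eq h3))
  set e : (lp (fun _ : ℕ => ℝ) 1) →L[ℝ] W := El.mkContinuous C hbound with he
  refine ⟨e, ?_⟩
  intro v
  have hps : HasSum (fun k => (v k) • y k) (e v) := (hsummable v).hasSum
  have h4 : Tendsto (fun N => ∑ k ∈ Finset.range N, (v k) • y k) atTop (𝓝 (e v)) :=
    hps.tendsto_sum_nat
  have h5 : Tendsto (fun N => ‖∑ k ∈ Finset.range N, (v k) • y k‖) atTop (𝓝 ‖e v‖) :=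
    h4.norm
  have h6 : Tendsto (fun N => c * ∑ k ∈ Finset.range N, ‖(v k : ℝ)‖) atTop (𝓝 (c * ‖v‖)) :=
    ((lp_one_hasSum_norm v).tendsto_sum_nat).const_mul c
  refine le_of_tendsto_of_tendsto' h6 h5 ?_
  intro N
  have := hl N (fun k => v k)
  simpa [Real.norm_eq_abs] using this

end Embedding

section WP

variable {E : Type*} [NormedAddCommGroup E] [NormedSpace ℝ E]

lemma bounded_of_wp (K : Set E) (h : WeaklyPrecompact K) : ∃ R, ∀ z ∈ K, ‖z‖ ≤ R := by
  by_contra hcon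
  push_neg at hcon
  have hz : ∀ n : ℕ, ∃ z ∈ K, (n : ℝ) < ‖z‖ := fun n => hcon n
  choose z hzK hzn using hz
  obtain ⟨φ, hφ, hconv⟩ := h z hzK
  set g : ℕ → (E →L[ℝ] ℝ) →L[ℝ] ℝ :=
    fun n => NormedSpace.inclusionInDoubleDual ℝ E (z (φ n)) with hg
  have hpt : ∀ f : E →L[ℝ] ℝ, ∃ Cf, ∀ n, ‖g n f‖ ≤ Cf := by
    intro f
    obtain ⟨l, hl⟩ := hconv f
    have h2 : Tendsto (fun n => ‖f (z (φ n))‖) atTop (𝓝 ‖l‖) := hl.norm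
    obtain ⟨Cf, hCf⟩ := h2.bddAbove_range
    refine ⟨Cf, fun n => ?_⟩
    have : ‖f (z (φ n))‖ ∈ Set.range fun n => ‖f (z (φ n))‖ := ⟨n, rfl⟩
    have h3 := hCf this
    simpa [hg, NormedSpace.dual_def] using h3
  have hbs : ∃ C', ∀ n, ‖g n‖ ≤ C' := by
    apply banach_steinhaus
    intro f
    exact hpt f
  obtain ⟨C', hC'⟩ := hbs
  have hnorm : ∀ n, ‖g n‖ = ‖z (φ n)‖ := by
    intro n
    exact (NormedSpace.inclusionInDoubleDualLi ℝ (E := E)).norm_map (z (φ n))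
  obtain ⟨N, hN⟩ := exists_nat_gt C'
  have h1 : (N : ℝ) ≤ (φ N : ℝ) := by exact_mod_cast Nat.cast_le.mpr (hφ.le_apply)
  have h2 := hzn (φ N)
  have h3 := hC' N
  rw [hnorm N] at h3
  linarith

lemma wp_union {K1 K2 : Set E} (h1 : WeaklyPrecompact K1) (h2 : WeaklyPrecompact K2) :
    WeaklyPrecompact (K1 ∪ K2) := by
  intro x hx
  by_cases hT : {n | x n ∈ K1}.Infinite
  · set ψ := Nat.nth (· ∈ {n | x n ∈ K1}) with hψ
    have hψm : StrictMono ψ := Nat.nth_strictMono hT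
    have hψmem : ∀ n, x (ψ n) ∈ K1 := fun n => Nat.nth_mem_of_infinite hT n
    obtain ⟨φ', hφ'm, hφ'c⟩ := h1 (fun n => x (ψ n)) hψmem
    exact ⟨ψ ∘ φ', hψm.comp hφ'm, fun f => hφ'c f⟩
  · have hT2 : {n | x n ∈ K2}.Infinite := by
      rw [Set.not_infinite] at hT
      have : {n | x n ∉ K1} ⊆ {n | x n ∈ K2} := fun n hn => (hx n).resolve_left hn
      apply Set.Infinite.mono this
      have := hT.infinite_compl
      simpa [Set.compl_setOf] using this
    set ψ := Nat.nth (· ∈ {n | x n ∈ K2}) with hψ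
    have hψm : StrictMono ψ := Nat.nth_strictMono hT2
    have hψmem : ∀ n, x (ψ n) ∈ K2 := fun n => Nat.nth_mem_of_infinite hT2 n
    obtain ⟨φ', hφ'm, hφ'c⟩ := h2 (fun n => x (ψ n)) hψmem
    exact ⟨ψ ∘ φ', hψm.comp hφ'm, fun f => hφ'c f⟩

end WP

section Quotient

variable {X Z : Type*} [NormedAddCommGroup X] [NormedSpace ℝ X] [CompleteSpace X]
    [NormedAddCommGroup Z] [NormedSpace ℝ Z] [CompleteSpace Z]

lemma no_ell1_in_ker (q : X →L[ℝ] Z)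
    (hY : ¬ ∃ (e : (lp (fun _ : ℕ => ℝ) 1) →L[ℝ] ↥(LinearMap.ker (q : X →ₗ[ℝ] Z))) (c : ℝ), 0 < c ∧
      ∀ v : lp (fun _ : ℕ => ℝ) 1, c * ‖v‖ ≤ ‖e v‖)
    (y : ℕ → X) (hker : ∀ n, y n ∈ LinearMap.ker (q : X →ₗ[ℝ] Z)) (C c : ℝ) (hc : 0 < c)
    (hb : ∀ n, ‖y n‖ ≤ C)
    (hl : ∀ (N : ℕ) (a : ℕ → ℝ),
      c * ∑ k ∈ Finset.range N, |a k| ≤ ‖∑ k ∈ Finset.range N, a k • y k‖) : False := by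
  have hclosed : IsClosed ((LinearMap.ker (q : X →ₗ[ℝ] Z) : Submodule ℝ X) : Set X) := ContinuousLinearMap.isClosed_ker q
  haveI : CompleteSpace ↥(LinearMap.ker (q : X →ₗ[ℝ] Z)) := hclosed.completeSpace_coe
  set w : ℕ → ↥(LinearMap.ker (q : X →ₗ[ℝ] Z)) := fun n => ⟨y n, hker n⟩ with hw
  have hwb : ∀ n, ‖w n‖ ≤ C := fun n => hb n
  have hwl : ∀ (N : ℕ) (a : ℕ → ℝ),
      c * ∑ k ∈ Finset.range N, |a k| ≤ ‖∑ k ∈ Finset.range N, a k • w k‖ := by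
    intro N a
    have hcoe : ((∑ k ∈ Finset.range N, a k • w k : ↥(LinearMap.ker (q : X →ₗ[ℝ] Z))) : X)
        = ∑ k ∈ Finset.range N, a k • y k := by
      push_cast
      rfl
    have : ‖∑ k ∈ Finset.range N, a k • w k‖
        = ‖∑ k ∈ Finset.range N, a k • y k‖ := by
      rw [← hcoe]
      rfl
    rw [this]
    exact hl N a
  obtain ⟨e, he⟩ := ell1_embedding w C c hc hwb hwl
  exact hY ⟨e, c, hc, he⟩

theorem perturb (q : X →L[ℝ] Z) (hq : Function.Surjective q)
    (hY : ¬ ∃ (e : (lp (fun _ : ℕ => ℝ) 1) →L[ℝ] ↥(LinearMap.ker (q : X →ₗ[ℝ] Z))) (c : ℝ), 0 < c ∧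
      ∀ v : lp (fun _ : ℕ => ℝ) 1, c * ‖v‖ ≤ ‖e v‖)
    (w : ℕ → X) (C0 : ℝ) (hbw : ∀ n, ‖w n‖ ≤ C0)
    (hwc : ∀ f : Z →L[ℝ] ℝ, ∃ l : ℝ, Tendsto (fun n => f (q (w n))) atTop (𝓝 l)) :
    ∃ φ : ℕ → ℕ, StrictMono φ ∧ ∀ f : X →L[ℝ] ℝ, ∃ l : ℝ,
      Tendsto (fun n => f (w (φ n))) atTop (𝓝 l) := by
  classical
  rcases rosenthal w C0 hbw with h | ⟨ψ, c, hψ, hc, hl⟩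
  · exact h
  exfalso
  have hC0 : 0 ≤ C0 := le_trans (norm_nonneg _) (hbw 0)
  set d : ℕ → X := fun k => w (ψ (2*k)) - w (ψ (2*k+1)) with hd
  have hdb : ∀ k, ‖d k‖ ≤ 2*C0 := by
    intro k
    calc ‖w (ψ (2*k)) - w (ψ (2*k+1))‖ ≤ ‖w (ψ (2*k))‖ + ‖w (ψ (2*k+1))‖ := norm_sub_le _ _
      _ ≤ 2*C0 := by linarith [hbw (ψ (2*k)), hbw (ψ (2*k+1))]
  -- ℓ₁ lower bound for the differences
  have hdl : ∀ (N : ℕ) (a : ℕ → ℝ),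
      c * ∑ k ∈ Finset.range N, |a k| ≤ ‖∑ k ∈ Finset.range N, a k • d k‖ := by
    intro N a
    set b : ℕ → ℝ := fun j => if j % 2 = 0 then a (j / 2) else -(a (j / 2)) with hb2
    have claim1 : ∀ N : ℕ, ∑ j ∈ Finset.range (2*N), b j • w (ψ j)
        = ∑ k ∈ Finset.range N, a k • d k := by
      intro N
      induction N with
      | zero => simp
      | succ N ih =>
        have h2 : 2*(N+1) = (2*N+1)+1 := by omega
        rw [h2, Finset.sum_range_succ, Finset.sum_range_succ, ih, Finset.sum_range_succ]
        have e1 : b (2*N) = a N := by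
          have h3 : (2*N) % 2 = 0 := by omega
          have h4 : (2*N) / 2 = N := by omega
          simp [hb2, h3, h4]
        have e2 : b (2*N+1) = -(a N) := by
          have h3 : (2*N+1) % 2 = 1 := by omega
          have h4 : (2*N+1) / 2 = N := by omega
          simp [hb2, h3, h4]
        rw [e1, e2]
        show _ + a N • w (ψ (2 * N)) + -a N • w (ψ (2 * N + 1))
            = _ + a N • (w (ψ (2*N)) - w (ψ (2*N+1)))
        rw [smul_sub, neg_smul]
        abel
    have claim2 : ∀ N : ℕ, ∑ j ∈ Finset.range (2*N), |b j|
        = 2 * ∑ k ∈ Finset.range N, |a k| := by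
      intro N
      induction N with
      | zero => simp
      | succ N ih =>
        have h2 : 2*(N+1) = (2*N+1)+1 := by omega
        rw [h2, Finset.sum_range_succ, Finset.sum_range_succ, ih, Finset.sum_range_succ]
        have e1 : b (2*N) = a N := by
          have h3 : (2*N) % 2 = 0 := by omega
          have h4 : (2*N) / 2 = N := by omega
          simp [hb2, h3, h4]
        have e2 : b (2*N+1) = -(a N) := by
          have h3 : (2*N+1) % 2 = 1 := by omega
          have h4 : (2*N+1) / 2 = N := by omega
          simp [hb2, h3, h4]
        rw [e1, e2, abs_neg]
        ring
    have h5 := hl (2*N) b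
    rw [claim1 N, claim2 N] at h5
    have h6 : 0 ≤ ∑ k ∈ Finset.range N, |a k| :=
      Finset.sum_nonneg (fun k _ => abs_nonneg _)
    nlinarith
  -- weakly null images
  have hdw : ∀ f : Z →L[ℝ] ℝ, Tendsto (fun k => f (q (d k))) atTop (𝓝 0) := by
    intro f
    obtain ⟨l, hlf⟩ := hwc f
    have hm1 : StrictMono (fun k : ℕ => ψ (2*k)) :=
      hψ.comp (fun a b h => by omega)
    have hm2 : StrictMono (fun k : ℕ => ψ (2*k+1)) :=
      hψ.comp (fun a b h => by omega)
    have h1 : Tendsto (fun k => f (q (w (ψ (2*k))))) atTop (𝓝 l) :=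
      hlf.comp hm1.tendsto_atTop
    have h2 : Tendsto (fun k => f (q (w (ψ (2*k+1))))) atTop (𝓝 l) :=
      hlf.comp hm2.tendsto_atTop
    have h3 := h1.sub h2
    rw [sub_self] at h3
    have h4 : (fun k => f (q (w (ψ (2*k)))) - f (q (w (ψ (2*k+1)))))
        = fun k => f (q (d k)) := by
      funext k
      rw [hd]
      simp [map_sub]
    rwa [h4] at h3
  -- Finset version of the lower bound
  have hdlF : ∀ (t : Finset ℕ) (a : ℕ → ℝ),
      c * ∑ j ∈ t, |a j| ≤ ‖∑ j ∈ t, a j • d j‖ := by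
    intro t a
    set N := t.sup id + 1 with hN
    have hsub : t ⊆ Finset.range N := by
      intro j hj
      exact Finset.mem_range.mpr (Nat.lt_succ_of_le (Finset.le_sup (f := id) hj))
    set a' : ℕ → ℝ := fun j => if j ∈ t then a j else 0 with ha'
    have e1 : ∑ j ∈ Finset.range N, a' j • d j = ∑ j ∈ t, a j • d j := by
      rw [← Finset.sum_subset hsub (fun j _ hnj => by simp [ha', hnj])]
      exact Finset.sum_congr rfl (fun j hj => by simp [ha', hj])
    have e2 : ∑ j ∈ Finset.range N, |a' j| = ∑ j ∈ t, |a j| := by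
      rw [← Finset.sum_subset hsub (fun j _ hnj => by simp [ha', hnj])]
      exact Finset.sum_congr rfl (fun j hj => by simp [ha', hj])
    have := hdl N a'
    rwa [e1, e2] at this
  -- open mapping lifts
  obtain ⟨Cq, hCq0, hCqlift⟩ := q.exists_preimage_norm_le hq
  choose lift hlift1 hlift2 using hCqlift
  set ε := c / (2*Cq) with hε
  have hε0 : 0 < ε := div_pos hc (by linarith)
  -- convex blocks with small image
  have blocks : ∀ m : ℕ, ∃ t : Finset ℕ, t.Nonempty ∧ ∃ lam : ℕ → ℝ,
      (∀ j ∈ t, m ≤ j) ∧ (∀ j ∈ t, 0 ≤ lam j) ∧ (∑ j ∈ t, lam j = 1) ∧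
      ‖q (∑ j ∈ t, lam j • d j)‖ < ε := by
    intro m
    set s : Set Z := (fun j => q (d j)) '' Ici m with hs
    have hcl : (0:Z) ∈ closure (convexHull ℝ s) := by
      by_contra hnot
      obtain ⟨f, u, hfu, hu0⟩ := geometric_hahn_banach_closed_point
        ((convex_convexHull ℝ s).closure) isClosed_closure hnot
      rw [map_zero] at hu0
      have hev1 : ∀ᶠ j in atTop, u < f (q (d j)) :=
        (hdw f).eventually (eventually_gt_nhds hu0)
      obtain ⟨j, hj1, hj2⟩ := (hev1.and (eventually_ge_atTop m)).exists
      have hmem : q (d j) ∈ s := ⟨j, mem_Ici.mpr hj2, rfl⟩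
      have := hfu _ (subset_closure (subset_convexHull ℝ s hmem))
      linarith
    obtain ⟨z, hz, hzd⟩ := Metric.mem_closure_iff.mp hcl ε hε0
    rw [convexHull_eq] at hz
    obtain ⟨ι, t, wgt, zf, hw0, hw1, hzs, hcm⟩ := hz
    have htne : t.Nonempty := by
      apply Finset.nonempty_of_ne_empty
      intro h
      rw [h] at hw1
      simp at hw1
    have hJ : ∀ i ∈ t, ∃ j, m ≤ j ∧ zf i = q (d j) := by
      intro i hi
      obtain ⟨j, hj1, hj2⟩ := hzs i hi
      exact ⟨j, hj1, hj2.symm⟩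
    choose! J hJ1 hJ2 using hJ
    have hmaps : ∀ i ∈ t, J i ∈ t.image J := fun i hi => Finset.mem_image_of_mem J hi
    refine ⟨t.image J, htne.image J,
      fun n => ∑ i ∈ t.filter (fun i => J i = n), wgt i, ?_, ?_, ?_, ?_⟩
    · rintro n hn
      obtain ⟨i, hi, rfl⟩ := Finset.mem_image.mp hn
      exact hJ1 i hi
    · intro n _
      exact Finset.sum_nonneg (fun i hi => hw0 i (Finset.mem_filter.mp hi).1)
    · rw [Finset.sum_fiberwise_of_maps_to hmaps wgt]
      exact hw1
    · have hzeq : q (∑ n ∈ t.image J, (∑ i ∈ t.filter (fun i => J i = n), wgt i) • d n)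
          = z := by
        rw [map_sum]
        have e3 : ∀ n ∈ t.image J,
            q ((∑ i ∈ t.filter (fun i => J i = n), wgt i) • d n)
            = ∑ i ∈ t.filter (fun i => J i = n), wgt i • zf i := by
          intro n hn
          rw [map_smul, Finset.sum_smul]
          apply Finset.sum_congr rfl
          intro i hi
          have hfi := Finset.mem_filter.mp hi
          rw [hJ2 i hfi.1, hfi.2]
        rw [Finset.sum_congr rfl e3,
          Finset.sum_fiberwise_of_maps_to hmaps (fun i => wgt i • zf i)]
        rw [← Finset.centerMass_eq_of_sum_1 _ _ hw1]
        exact hcm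
      rw [hzeq]
      rwa [dist_zero_left] at hzd
  choose T hTne Lam hTm hTpos hTsum hTq using blocks
  -- disjoint blocks by iteration
  set mb : ℕ → ℕ := fun k => Nat.rec 0 (fun _ mk => (T mk).max' (hTne mk) + 1) k with hmb
  have hmb_succ : ∀ k, mb (k+1) = (T (mb k)).max' (hTne (mb k)) + 1 := fun k => rfl
  set F : ℕ → Finset ℕ := fun k => T (mb k) with hF
  have hFlt : ∀ k, ∀ j ∈ F k, j < mb (k+1) := by
    intro k j hj
    rw [hmb_succ]
    exact Nat.lt_succ_of_le (Finset.le_max' _ j hj)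
  have hFge : ∀ k, ∀ j ∈ F k, mb k ≤ j := fun k j hj => hTm (mb k) j hj
  have hmb_lt : ∀ k, mb k < mb (k+1) := by
    intro k
    obtain ⟨j, hj⟩ := hTne (mb k)
    exact lt_of_le_of_lt (hFge k j hj) (hFlt k j hj)
  have hmb_mono : StrictMono mb := strictMono_nat_of_lt_succ hmb_lt
  have hdisjF : ∀ k k', k < k' → ∀ j ∈ F k, ∀ j' ∈ F k', j < j' := by
    intro k k' hkk' j hj j' hj'
    have h1 : j < mb (k+1) := hFlt k j hj
    have h2 : mb (k+1) ≤ mb k' := hmb_mono.monotone (Nat.succ_le_of_lt hkk')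
    have h3 : mb k' ≤ j' := hFge k' j' hj'
    omega
  set lamk : ℕ → ℕ → ℝ := fun k => Lam (mb k) with hlamk
  set ee : ℕ → X := fun k => ∑ j ∈ F k, lamk k j • d j with hee
  have heb : ∀ k, ‖ee k‖ ≤ 2*C0 := by
    intro k
    calc ‖∑ j ∈ F k, lamk k j • d j‖ ≤ ∑ j ∈ F k, ‖lamk k j • d j‖ := norm_sum_le _ _
      _ ≤ ∑ j ∈ F k, lamk k j * (2*C0) := by
          apply Finset.sum_le_sum
          intro j hj
          rw [norm_smul, Real.norm_eq_abs, abs_of_nonneg (hTpos (mb k) j hj)]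
          exact mul_le_mul_of_nonneg_left (hdb j) (hTpos (mb k) j hj)
      _ = 2*C0 := by rw [← Finset.sum_mul, hTsum (mb k), one_mul]
  have heq : ∀ k, ‖q (ee k)‖ < ε := fun k => hTq (mb k)
  have hel : ∀ (N : ℕ) (a : ℕ → ℝ),
      c * ∑ k ∈ Finset.range N, |a k| ≤ ‖∑ k ∈ Finset.range N, a k • ee k‖ := by
    intro N a
    have hdisj : (↑(Finset.range N) : Set ℕ).PairwiseDisjoint F := by
      intro k _ k' _ hne
      apply Finset.disjoint_left.mpr
      intro j hj hj'
      rcases lt_or_gt_of_ne hne with h | h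
      · exact absurd (hdisjF k k' h j hj j hj') (lt_irrefl j)
      · exact absurd (hdisjF k' k h j hj' j hj) (lt_irrefl j)
    set b : ℕ → ℝ :=
      fun j => ∑ k ∈ (Finset.range N).filter (fun k => j ∈ F k), a k * lamk k j with hbb
    have hbval : ∀ k ∈ Finset.range N, ∀ j ∈ F k, b j = a k * lamk k j := by
      intro k hk j hj
      rw [hbb]
      show (∑ k' ∈ (Finset.range N).filter (fun k' => j ∈ F k'), a k' * lamk k' j)
          = a k * lamk k j
      have hkmem : k ∈ (Finset.range N).filter (fun k' => j ∈ F k') :=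
        Finset.mem_filter.mpr ⟨hk, hj⟩
      apply Finset.sum_eq_single_of_mem (f := fun k' => a k' * lamk k' j) k hkmem
      intro k' hk' hne
      exfalso
      have h2 := (Finset.mem_filter.mp hk').2
      rcases lt_or_gt_of_ne hne with h | h
      · exact absurd (hdisjF k' k h j h2 j hj) (lt_irrefl j)
      · exact absurd (hdisjF k k' h j hj j h2) (lt_irrefl j)
    have e1 : ∑ j ∈ (Finset.range N).biUnion F, b j • d j
        = ∑ k ∈ Finset.range N, a k • ee k := by
      rw [Finset.sum_biUnion hdisj]
      apply Finset.sum_congr rfl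
      intro k hk
      rw [hee]
      rw [Finset.smul_sum]
      apply Finset.sum_congr rfl
      intro j hj
      rw [hbval k hk j hj, mul_smul]
    have e2 : ∑ j ∈ (Finset.range N).biUnion F, |b j|
        = ∑ k ∈ Finset.range N, |a k| := by
      rw [Finset.sum_biUnion hdisj]
      apply Finset.sum_congr rfl
      intro k hk
      have h1 : ∑ j ∈ F k, |b j| = ∑ j ∈ F k, |a k| * lamk k j := by
        apply Finset.sum_congr rfl
        intro j hj
        rw [hbval k hk j hj, abs_mul, abs_of_nonneg (hTpos (mb k) j hj)]
      rw [h1, ← Finset.mul_sum]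
      rw [show (∑ j ∈ F k, lamk k j) = 1 from hTsum (mb k), mul_one]
    have h5 := hdlF ((Finset.range N).biUnion F) b
    rwa [e1, e2] at h5
  -- lift and perturb into the kernel
  set v : ℕ → X := fun k => lift (q (ee k)) with hv
  have hv1 : ∀ k, q (v k) = q (ee k) := fun k => hlift1 _
  have hv2 : ∀ k, ‖v k‖ ≤ c/2 := by
    intro k
    calc ‖v k‖ ≤ Cq * ‖q (ee k)‖ := hlift2 _
      _ ≤ Cq * ε := mul_le_mul_of_nonneg_left (heq k).le (le_of_lt hCq0)
      _ = c/2 := by rw [hε]; field_simp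
  set y : ℕ → X := fun k => ee k - v k with hy
  have hyk : ∀ k, y k ∈ LinearMap.ker (q : X →ₗ[ℝ] Z) := by
    intro k
    have : q (y k) = 0 := by rw [hy]; simp [map_sub, hv1 k]
    simpa [LinearMap.mem_ker] using this
  have hyb : ∀ k, ‖y k‖ ≤ 2*C0 + c/2 := by
    intro k
    calc ‖y k‖ ≤ ‖ee k‖ + ‖v k‖ := norm_sub_le _ _
      _ ≤ 2*C0 + c/2 := add_le_add (heb k) (hv2 k)
  have hyl : ∀ (N : ℕ) (a : ℕ → ℝ),
      (c/2) * ∑ k ∈ Finset.range N, |a k| ≤ ‖∑ k ∈ Finset.range N, a k • y k‖ := by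
    intro N a
    have h1 : ∑ k ∈ Finset.range N, a k • y k
        = (∑ k ∈ Finset.range N, a k • ee k) - ∑ k ∈ Finset.range N, a k • v k := by
      rw [← Finset.sum_sub_distrib]
      apply Finset.sum_congr rfl
      intro k _
      rw [hy, smul_sub]
    have h2 : ‖∑ k ∈ Finset.range N, a k • v k‖ ≤ (c/2) * ∑ k ∈ Finset.range N, |a k| := by
      calc ‖∑ k ∈ Finset.range N, a k • v k‖ ≤ ∑ k ∈ Finset.range N, ‖a k • v k‖ :=
            norm_sum_le _ _
        _ ≤ ∑ k ∈ Finset.range N, |a k| * (c/2) := by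
            apply Finset.sum_le_sum
            intro k _
            rw [norm_smul, Real.norm_eq_abs]
            exact mul_le_mul_of_nonneg_left (hv2 k) (abs_nonneg _)
        _ = (c/2) * ∑ k ∈ Finset.range N, |a k| := by rw [← Finset.sum_mul, mul_comm]
    have h3 := hel N a
    calc (c/2) * ∑ k ∈ Finset.range N, |a k|
        = c * ∑ k ∈ Finset.range N, |a k| - (c/2) * ∑ k ∈ Finset.range N, |a k| := by ring
      _ ≤ ‖∑ k ∈ Finset.range N, a k • ee k‖ - ‖∑ k ∈ Finset.range N, a k • v k‖ :=
          sub_le_sub h3 h2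
      _ ≤ ‖(∑ k ∈ Finset.range N, a k • ee k) - ∑ k ∈ Finset.range N, a k • v k‖ :=
          norm_sub_norm_le _ _
      _ = ‖∑ k ∈ Finset.range N, a k • y k‖ := by rw [← h1]
  exact no_ell1_in_ker q hY y hyk (2*C0 + c/2) (c/2) (by linarith) hyb hyl

end Quotient

end WPG18

open WPG18 in
/-- if Y ⊆ X is a closed subspace containing no isomorphic copy of ℓ₁
and X/Y is WPG, then X is WPG. The quotient X/Y is represented by any Banach space Z
together with a surjective operator q : X → Z with kernel Y. -/
theorem WPG_of_quotient_WPG_of_no_ell1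
    {X Z : Type*} [NormedAddCommGroup X] [NormedSpace ℝ X] [CompleteSpace X]
    [NormedAddCommGroup Z] [NormedSpace ℝ Z] [CompleteSpace Z]
    (q : X →L[ℝ] Z) (hq : Function.Surjective q)
    (hY : ¬ ∃ (e : (lp (fun _ : ℕ => ℝ) 1) →L[ℝ] ↥(LinearMap.ker (q : X →ₗ[ℝ] Z))) (c : ℝ), 0 < c ∧
      ∀ v : lp (fun _ : ℕ => ℝ) 1, c * ‖v‖ ≤ ‖e v‖)
    (hZ : ∃ K : Set Z, WeaklyPrecompact K ∧
      closure ((Submodule.span ℝ K : Submodule ℝ Z) : Set Z) = Set.univ) :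
    ∃ K : Set X, WeaklyPrecompact K ∧
      closure ((Submodule.span ℝ K : Submodule ℝ X) : Set X) = Set.univ := by
  classical
  obtain ⟨K, hK, hKdense⟩ := hZ
  obtain ⟨R, hR⟩ := bounded_of_wp K hK
  obtain ⟨Cq, hCq0, hCqlift⟩ := q.exists_preimage_norm_le hq
  choose u hu1 hu2 using hCqlift
  set G : Set X := u '' K with hG
  set BY : Set X := {x : X | x ∈ LinearMap.ker (q : X →ₗ[ℝ] Z) ∧ ‖x‖ ≤ 1} with hBY
  have hGwp : WeaklyPrecompact G := by
    intro x hx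
    choose z hzK hxz using hx
    obtain ⟨φ₁, hφ₁, hφ₁c⟩ := hK z hzK
    have hb : ∀ n, ‖x (φ₁ n)‖ ≤ Cq * R := by
      intro n
      rw [← hxz (φ₁ n)]
      calc ‖u (z (φ₁ n))‖ ≤ Cq * ‖z (φ₁ n)‖ := hu2 _
        _ ≤ Cq * R := mul_le_mul_of_nonneg_left (hR _ (hzK _)) (le_of_lt hCq0)
    have hwc : ∀ f : Z →L[ℝ] ℝ, ∃ l : ℝ,
        Tendsto (fun n => f (q (x (φ₁ n)))) atTop (𝓝 l) := by
      intro f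
      obtain ⟨l, hl⟩ := hφ₁c f
      refine ⟨l, ?_⟩
      have he : ∀ n, f (q (x (φ₁ n))) = f (z (φ₁ n)) := by
        intro n
        rw [← hxz (φ₁ n), hu1]
      simpa only [he] using hl
    obtain ⟨φ₂, hφ₂, hφ₂c⟩ := perturb q hq hY (fun n => x (φ₁ n)) (Cq * R) hb hwc
    exact ⟨φ₁ ∘ φ₂, hφ₁.comp hφ₂, fun f => hφ₂c f⟩
  have hBYwp : WeaklyPrecompact BY := by
    intro y hy
    have hb : ∀ n, ‖y n‖ ≤ 1 := fun n => (hy n).2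
    rcases rosenthal y 1 hb with ⟨φ, hφ, hc⟩ | ⟨φ, c, hφ, hc, hl⟩
    · exact ⟨φ, hφ, hc⟩
    · exact (no_ell1_in_ker q hY (fun k => y (φ k))
        (fun k => (hy (φ k)).1) 1 c hc (fun k => hb _) hl).elim
  refine ⟨G ∪ BY, wp_union hGwp hBYwp, ?_⟩
  set W : Submodule ℝ X := (Submodule.span ℝ (G ∪ BY)).topologicalClosure with hW
  have hWclosed : IsClosed (W : Set X) := Submodule.isClosed_topologicalClosure _
  have hsubW : (Submodule.span ℝ (G ∪ BY) : Set X) ⊆ (W : Set X) :=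
    Submodule.le_topologicalClosure _
  have hkerW : ∀ y ∈ LinearMap.ker (q : X →ₗ[ℝ] Z), y ∈ W := by
    intro y hyk
    by_cases hy0 : y = 0
    · rw [hy0]; exact W.zero_mem
    · have hyn : ‖y‖ ≠ 0 := norm_ne_zero_iff.mpr hy0
      have hmem : (‖y‖⁻¹ • y) ∈ BY := by
        constructor
        · exact Submodule.smul_mem _ _ hyk
        · rw [norm_smul, norm_inv, norm_norm, inv_mul_cancel₀ hyn]
      have h1 : (‖y‖⁻¹ • y) ∈ W :=
        hsubW (Submodule.subset_span (Set.mem_union_right _ hmem))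
      have h2 := W.smul_mem ‖y‖ h1
      rwa [smul_smul, mul_inv_cancel₀ hyn, one_smul] at h2
  have hliftW : ∀ z ∈ Submodule.span ℝ K, ∃ xw ∈ W, q xw = z := by
    intro z hz
    induction hz using Submodule.span_induction with
    | mem z hzK =>
      exact ⟨u z, hsubW (Submodule.subset_span (Set.mem_union_left _ ⟨z, hzK, rfl⟩)), hu1 z⟩
    | zero => exact ⟨0, W.zero_mem, map_zero q⟩
    | add z1 z2 h1 h2 ih1 ih2 =>
      obtain ⟨x1, hx1, he1⟩ := ih1
      obtain ⟨x2, hx2, he2⟩ := ih2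
      exact ⟨x1 + x2, W.add_mem hx1 hx2, by rw [map_add, he1, he2]⟩
    | smul r z hzs ih =>
      obtain ⟨x1, hx1, he1⟩ := ih
      exact ⟨r • x1, W.smul_mem r hx1, by rw [map_smul, he1]⟩
  have happrox : ∀ x : X, ∀ ε : ℝ, 0 < ε → ∃ xw ∈ W, ‖x - xw‖ ≤ Cq * ε := by
    intro x ε hε
    have hqx : q x ∈ closure ((Submodule.span ℝ K : Submodule ℝ Z) : Set Z) := by
      rw [hKdense]; trivial
    obtain ⟨z, hzs, hdz⟩ := Metric.mem_closure_iff.mp hqx ε hε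
    obtain ⟨xw, hxwW, hxwq⟩ := hliftW z hzs
    set v := u (q x - z) with hv
    have hv1 : q v = q x - z := hu1 _
    have hv2 : ‖v‖ ≤ Cq * ε := by
      calc ‖v‖ ≤ Cq * ‖q x - z‖ := hu2 _
        _ ≤ Cq * ε := by
            apply mul_le_mul_of_nonneg_left _ (le_of_lt hCq0)
            rw [← dist_eq_norm]
            exact le_of_lt hdz
    refine ⟨xw + (x - xw - v), W.add_mem hxwW (hkerW _ ?_), ?_⟩
    · rw [LinearMap.mem_ker]
      show q (x - xw - v) = 0
      rw [map_sub, map_sub, hxwq, hv1]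
      abel
    · have : x - (xw + (x - xw - v)) = v := by abel
      rw [this]
      exact hv2
  rw [show closure ((Submodule.span ℝ (G ∪ BY) : Submodule ℝ X) : Set X) = (W : Set X) from
    (Submodule.topologicalClosure_coe _).symm]
  apply Set.eq_univ_of_forall
  intro x
  have : x ∈ closure (W : Set X) := by
    rw [Metric.mem_closure_iff]
    intro δ hδ
    obtain ⟨xw, hxwW, hxw⟩ := happrox x (δ / (2 * Cq)) (by positivity)
    refine ⟨xw, hxwW, ?_⟩
    rw [dist_eq_norm]
    calc ‖x - xw‖ ≤ Cq * (δ / (2 * Cq)) := hxw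
      _ = δ / 2 := by field_simp
      _ < δ := by linarith
  rwa [hWclosed.closure_eq] at this
end

section
/- Let X be a Banach lattice and Y ⊆ X a closed ideal. If Y is reflexive and the quotient Banach lattice X/Y is LWCG, then X is LWCG. -/
open Filter Topology Set

section GenAux
open NormedSpace
variable {E : Type*} [NormedAddCommGroup E] [Lattice E] [NormedSpace ℝ E]

theorem sublatticeGen_isClosedSublattice (A : Set E) :
    IsClosedSublattice (sublatticeGen A) := by
  refine ⟨isClosed_sInter fun S hS => hS.1.1,
    Set.mem_sInter.mpr fun S hS => hS.1.2.1,
    fun x hx y hy => Set.mem_sInter.mpr fun S hS =>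
      hS.1.2.2.1 x (Set.mem_sInter.mp hx S hS) y (Set.mem_sInter.mp hy S hS),
    fun c x hx => Set.mem_sInter.mpr fun S hS =>
      hS.1.2.2.2.1 c x (Set.mem_sInter.mp hx S hS),
    fun x hx y hy => Set.mem_sInter.mpr fun S hS =>
      hS.1.2.2.2.2.1 x (Set.mem_sInter.mp hx S hS) y (Set.mem_sInter.mp hy S hS),
    fun x hx y hy => Set.mem_sInter.mpr fun S hS =>
      hS.1.2.2.2.2.2 x (Set.mem_sInter.mp hx S hS) y (Set.mem_sInter.mp hy S hS)⟩

theorem subset_sublatticeGen (A : Set E) : A ⊆ sublatticeGen A :=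
  fun _ hx => Set.mem_sInter.mpr fun _ hS => hS.2 hx

theorem sublatticeGen_subset {A S : Set E} (hS : IsClosedSublattice S) (hAS : A ⊆ S) :
    sublatticeGen A ⊆ S := fun _ hx => Set.mem_sInter.mp hx S ⟨hS, hAS⟩

end GenAux

section MainAux
open NormedSpace

theorem weaklyCompact_bddAux {E : Type*} [NormedAddCommGroup E] [NormedSpace ℝ E]
    (K : Set E) (hK : IsCompact (toWeakSpace ℝ E '' K)) : ∃ r : ℝ, 0 < r ∧ ∀ z ∈ K, ‖z‖ ≤ r := by
  have hpt : ∀ f : StrongDual ℝ E, ∃ C : ℝ, ∀ k : K, ‖inclusionInDoubleDual ℝ E (k : E) f‖ ≤ C := by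
    intro f
    have hc : Continuous fun x : WeakSpace ℝ E => (topDualPairing ℝ E).flip x f :=
      WeakBilin.eval_continuous _ f
    have him : IsCompact ((fun x : WeakSpace ℝ E => (topDualPairing ℝ E).flip x f) '' (toWeakSpace ℝ E '' K)) :=
      hK.image hc
    obtain ⟨C, hC⟩ := him.isBounded.subset_closedBall 0
    refine ⟨C, fun k => ?_⟩
    have : f (k : E) ∈ (fun x : WeakSpace ℝ E => (topDualPairing ℝ E).flip x f) '' (toWeakSpace ℝ E '' K) :=
      ⟨toWeakSpace ℝ E (k : E), ⟨(k : E), k.2, rfl⟩, rfl⟩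
    have := hC this
    simpa [Metric.mem_closedBall, Real.dist_eq, inclusionInDoubleDual] using this
  obtain ⟨C', hC'⟩ := banach_steinhaus (g := fun k : K => inclusionInDoubleDual ℝ E (k : E)) (fun f => hpt f)
  refine ⟨max C' 1, lt_max_of_lt_right one_pos, fun z hz => ?_⟩
  have h1 : ‖inclusionInDoubleDual ℝ E z‖ = ‖z‖ := (inclusionInDoubleDualLi ℝ (E := E)).norm_map z
  have := hC' ⟨z, hz⟩
  rw [h1] at this
  exact this.trans (le_max_left _ _)


theorem factor_throughAux {X Z : Type*} [NormedAddCommGroup X] [NormedSpace ℝ X] [CompleteSpace X]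
    [NormedAddCommGroup Z] [NormedSpace ℝ Z] [CompleteSpace Z]
    (q : X →L[ℝ] Z) (hq : Function.Surjective q) (f : X →L[ℝ] ℝ)
    (hf : ∀ y ∈ LinearMap.ker (q : X →ₗ[ℝ] Z), f y = 0) : ∃ g : Z →L[ℝ] ℝ, ∀ x, g (q x) = f x := by
  obtain ⟨C, hCpos, hC⟩ := q.exists_preimage_norm_le hq
  have key : ∀ x x' : X, q x = q x' → f x = f x' := by
    intro x x' h
    have : f (x - x') = 0 := hf _ (by simp [LinearMap.mem_ker, h])
    have := this
    rw [map_sub] at this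
    linarith
  set s := Function.surjInv hq with hs
  have hqs : ∀ z, q (s z) = z := fun z => Function.surjInv_eq hq z
  let g₀ : Z →ₗ[ℝ] ℝ :=
    { toFun := fun z => f (s z)
      map_add' := by
        intro z1 z2
        have : f (s (z1 + z2)) = f (s z1 + s z2) := key _ _ (by simp [hqs])
        simpa [map_add] using this
      map_smul' := by
        intro c z
        have : f (s (c • z)) = f (c • s z) := key _ _ (by simp [hqs])
        simpa [map_smul] using this }
  have hbound : ∀ z, ‖g₀ z‖ ≤ (‖f‖ * C) * ‖z‖ := by
    intro z
    obtain ⟨x, hx, hxn⟩ := hC z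
    have : g₀ z = f x := key _ _ (by rw [hqs, hx])
    rw [this]
    calc ‖f x‖ ≤ ‖f‖ * ‖x‖ := f.le_opNorm x
      _ ≤ ‖f‖ * (C * ‖z‖) := by
          exact mul_le_mul_of_nonneg_left hxn (norm_nonneg f)
      _ = (‖f‖ * C) * ‖z‖ := by ring
  refine ⟨g₀.mkContinuous _ hbound, fun x => ?_⟩
  show g₀ (q x) = f x
  exact key _ _ (hqs (q x))

set_option maxHeartbeats 1600000 in
theorem preimage_weaklyCompactAux {X Z : Type*}
    [NormedAddCommGroup X] [NormedSpace ℝ X] [CompleteSpace X]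
    [NormedAddCommGroup Z] [NormedSpace ℝ Z] [CompleteSpace Z]
    (q : X →L[ℝ] Z) (hq : Function.Surjective q)
    (hrefl : Function.Surjective (NormedSpace.inclusionInDoubleDual ℝ ↥(LinearMap.ker (q : X →ₗ[ℝ] Z))))
    {K : Set Z} (hK : IsCompact (toWeakSpace ℝ Z '' K)) {r : ℝ} (hr : 0 ≤ r) :
    IsCompact (toWeakSpace ℝ X '' (q ⁻¹' K ∩ Metric.closedBall 0 r)) := by
  set Y : Submodule ℝ X := LinearMap.ker (q : X →ₗ[ℝ] Z) with hYdef
  set A : Set X := q ⁻¹' K ∩ Metric.closedBall 0 r with hA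
  set u : WeakSpace ℝ X → X := fun xw => (toWeakSpace ℝ X).symm xw with hu
  rw [isCompact_iff_ultrafilter_le_nhds]
  intro F hF
  have hmem : toWeakSpace ℝ X '' A ∈ F := le_principal_iff.mp hF
  -- push the ultrafilter to the weak space of Z
  set F₁ : Ultrafilter (WeakSpace ℝ Z) := F.map (WeakSpace.map q) with hF₁
  have h1 : toWeakSpace ℝ Z '' K ∈ F₁ := by
    rw [hF₁, Ultrafilter.mem_map]
    refine Filter.mem_of_superset hmem ?_
    rintro xw ⟨a, ha, rfl⟩
    exact ⟨q a, ha.1, rfl⟩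
  obtain ⟨zw, hzwmem, hzconv⟩ := hK.ultrafilter_le_nhds F₁ (le_principal_iff.mpr h1)
  obtain ⟨z0, hz0K, hz0⟩ := hzwmem
  have hgz : ∀ g : Z →L[ℝ] ℝ, Tendsto (fun xw : WeakSpace ℝ X => g (q (u xw))) ↑F (𝓝 (g z0)) := by
    intro g
    have hc : Continuous fun zw : WeakSpace ℝ Z => (topDualPairing ℝ Z).flip zw g :=
      WeakBilin.eval_continuous _ g
    have h2 : Tendsto (fun zw : WeakSpace ℝ Z => (topDualPairing ℝ Z).flip zw g) ↑F₁
        (𝓝 ((topDualPairing ℝ Z).flip zw g)) := (hc.tendsto zw).mono_left hzconv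
    rw [hF₁, Ultrafilter.coe_map, Filter.tendsto_map'_iff] at h2
    have : ((topDualPairing ℝ Z).flip zw g) = g z0 := by rw [← hz0]; rfl
    rw [this] at h2
    exact h2
  -- push the ultrafilter to the weak-star bidual
  set j : WeakSpace ℝ X → WeakDual ℝ (StrongDual ℝ X) :=
    fun xw => StrongDual.toWeakDual (inclusionInDoubleDual ℝ X (u xw)) with hj
  set F₂ : Ultrafilter (WeakDual ℝ (StrongDual ℝ X)) := F.map j with hF₂
  have h2 : WeakDual.toStrongDual ⁻¹' Metric.closedBall 0 r ∈ F₂ := by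
    rw [hF₂, Ultrafilter.mem_map]
    refine Filter.mem_of_superset hmem ?_
    rintro xw ⟨a, ha, rfl⟩
    have hna : ‖a‖ ≤ r := by simpa [Metric.mem_closedBall, dist_zero_right] using ha.2
    have : ‖inclusionInDoubleDual ℝ X a‖ = ‖a‖ := (inclusionInDoubleDualLi ℝ (E := X)).norm_map a
    simp only [Set.mem_preimage, Metric.mem_closedBall, dist_zero_right]
    exact (dist_zero_right (inclusionInDoubleDual ℝ X a)).le.trans (this.le.trans hna)
  obtain ⟨xsw, hxsmem, hxconv⟩ :=
    (WeakDual.isCompact_closedBall (𝕜 := ℝ) (E := StrongDual ℝ X) 0 r).ultrafilter_le_nhds F₂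
      (le_principal_iff.mpr h2)
  set x'' : StrongDual ℝ (StrongDual ℝ X) := WeakDual.toStrongDual xsw with hx''
  have heval : ∀ f : StrongDual ℝ X, Tendsto (fun xw : WeakSpace ℝ X => f (u xw)) ↑F (𝓝 (x'' f)) := by
    intro f
    have hc : Continuous fun w : WeakDual ℝ (StrongDual ℝ X) => (topDualPairing ℝ (StrongDual ℝ X)) w f :=
      WeakBilin.eval_continuous _ f
    have h3 : Tendsto (fun w : WeakDual ℝ (StrongDual ℝ X) => (topDualPairing ℝ (StrongDual ℝ X)) w f) ↑F₂
        (𝓝 ((topDualPairing ℝ (StrongDual ℝ X)) xsw f)) := (hc.tendsto xsw).mono_left hxconv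
    rw [hF₂, Ultrafilter.coe_map, Filter.tendsto_map'_iff] at h3
    exact h3
  -- pick a preimage of z0
  set x0 : X := Function.surjInv hq z0 with hx0
  have hqx0 : q x0 = z0 := Function.surjInv_eq hq z0
  -- key : x'' and evaluation at x0 agree on functionals vanishing on Y
  have key : ∀ f : StrongDual ℝ X, (∀ y ∈ LinearMap.ker (q : X →ₗ[ℝ] Z), f y = 0) → x'' f = f x0 := by
    intro f hf
    obtain ⟨g, hgf⟩ := factor_throughAux q hq f hf
    have t2 : Tendsto (fun xw : WeakSpace ℝ X => f (u xw)) ↑F (𝓝 (g z0)) := by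
      have := hgz g
      simpa only [hgf] using this
    have := tendsto_nhds_unique (heval f) t2
    rw [this, ← hqx0, hgf]
  have welldef : ∀ f g : StrongDual ℝ X, (∀ v : ↥Y, f v = g v) → x'' f - f x0 = x'' g - g x0 := by
    intro f g h
    have h0 : ∀ y ∈ LinearMap.ker (q : X →ₗ[ℝ] Z), (f - g) y = 0 := by
      intro y hy
      have := h ⟨y, hy⟩
      simp only [ContinuousLinearMap.sub_apply]
      rw [this]; ring
    have := key (f - g) h0
    simp only [map_sub, ContinuousLinearMap.sub_apply] at this
    linarith
  -- build the element of the bidual of Y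
  choose extF hext hnorm using fun h : StrongDual ℝ ↥Y => exists_extension_norm_eq Y h
  set φ : StrongDual ℝ ↥Y →ₗ[ℝ] ℝ :=
    { toFun := fun h => x'' (extF h) - extF h x0
      map_add' := by
        intro h1 h2
        have := welldef (extF (h1 + h2)) (extF h1 + extF h2) (by
          intro v
          simp only [ContinuousLinearMap.add_apply]
          rw [hext (h1 + h2) v, hext h1 v, hext h2 v]; rfl)
        simp only [map_add, ContinuousLinearMap.add_apply] at this ⊢
        linarith
      map_smul' := by
        intro c h
        have := welldef (extF (c • h)) (c • extF h) (by
          intro v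
          simp only [ContinuousLinearMap.smul_apply]
          rw [hext (c • h) v, hext h v]; rfl)
        simp only [map_smul, ContinuousLinearMap.smul_apply, smul_eq_mul,
          RingHom.id_apply] at this ⊢
        linarith } with hφ
  have hφbound : ∀ h : StrongDual ℝ ↥Y, ‖φ h‖ ≤ (‖x''‖ + ‖x0‖) * ‖h‖ := by
    intro h
    have e1 : ‖x'' (extF h)‖ ≤ ‖x''‖ * ‖h‖ := by
      calc ‖x'' (extF h)‖ ≤ ‖x''‖ * ‖extF h‖ := x''.le_opNorm _
        _ = ‖x''‖ * ‖h‖ := by rw [hnorm]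
    have e2 : ‖extF h x0‖ ≤ ‖h‖ * ‖x0‖ := by
      calc ‖extF h x0‖ ≤ ‖extF h‖ * ‖x0‖ := (extF h).le_opNorm _
        _ = ‖h‖ * ‖x0‖ := by rw [hnorm]
    calc ‖φ h‖ ≤ ‖x'' (extF h)‖ + ‖extF h x0‖ := norm_sub_le _ _
      _ ≤ ‖x''‖ * ‖h‖ + ‖h‖ * ‖x0‖ := add_le_add e1 e2
      _ = (‖x''‖ + ‖x0‖) * ‖h‖ := by ring
  obtain ⟨y, hy⟩ := hrefl (φ.mkContinuous _ hφbound)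
  have hyval : ∀ h : StrongDual ℝ ↥Y, h y = x'' (extF h) - extF h x0 := by
    intro h
    calc h y = inclusionInDoubleDual ℝ ↥Y y h := (NormedSpace.dual_def ℝ ↥Y y h).symm
      _ = (φ.mkContinuous _ hφbound) h := congrArg (fun Ψ : StrongDual ℝ (StrongDual ℝ ↥Y) => Ψ h) hy
      _ = x'' (extF h) - extF h x0 := rfl
  set a : X := x0 + (y : X) with ha2
  have hfa : ∀ f : StrongDual ℝ X, x'' f = f a := by
    intro f
    set h : StrongDual ℝ ↥Y := f.comp Y.subtypeL with hh
    have hres : ∀ v : ↥Y, f v = extF h v := by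
      intro v
      rw [hext h v]; rfl
    have := welldef f (extF h) hres
    have h2 : x'' (extF h) - extF h x0 = f (y : X) := (hyval h).symm
    have : x'' f = f x0 + f (y : X) := by linarith
    rw [this, ha2, map_add]
  have hqy : q (y : X) = 0 := y.2
  have hqa : q a = z0 := by rw [ha2, map_add, hqx0, hqy, add_zero]
  have hanorm : ‖a‖ ≤ r := by
    rcases eq_or_ne a 0 with h | h
    · simpa [h] using hr
    obtain ⟨g, hg1, hg2⟩ := exists_dual_vector ℝ a (norm_ne_zero_iff.mpr h)
    have hlim : Tendsto (fun xw : WeakSpace ℝ X => g (u xw)) ↑F (𝓝 ‖a‖) := by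
      have := heval g
      rw [hfa g, hg2] at this
      exact this
    have hev : ∀ᶠ xw in (↑F : Filter (WeakSpace ℝ X)), g (u xw) ≤ r := by
      refine Filter.mem_of_superset hmem ?_
      rintro xw ⟨b, hb, rfl⟩
      have hnb : ‖b‖ ≤ r := by simpa [Metric.mem_closedBall, dist_zero_right] using hb.2
      have : ‖g b‖ ≤ ‖g‖ * ‖b‖ := g.le_opNorm b
      rw [hg1, one_mul] at this
      calc g (u (toWeakSpace ℝ X b)) = g b := rfl
        _ ≤ ‖g b‖ := le_abs_self _
        _ ≤ ‖b‖ := this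
        _ ≤ r := hnb
    exact le_of_tendsto hlim hev
  have haA : a ∈ A := by
    constructor
    · show q a ∈ K
      rw [hqa]; exact hz0K
    · simpa [Metric.mem_closedBall, dist_zero_right] using hanorm
  refine ⟨toWeakSpace ℝ X a, ⟨a, haA, rfl⟩, ?_⟩
  have hinj : Function.Injective ((topDualPairing ℝ X).flip) := by
    intro v w hvw
    refine (NormedSpace.eq_iff_forall_dual_eq ℝ).mpr fun g => ?_
    exact congrArg (fun m => m g) hvw
  have := (WeakBilin.tendsto_iff_forall_eval_tendsto
      (B := (topDualPairing ℝ X).flip) hinj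
      (f := fun xw : WeakSpace ℝ X => xw) (l := ↑F) (x := toWeakSpace ℝ X a)).mpr ?_
  · have h5 : Filter.map (fun xw : WeakSpace ℝ X => xw) ↑F ≤ 𝓝 (toWeakSpace ℝ X a) := this
    rwa [Filter.map_id'] at h5
  · intro f
    have := heval f
    rw [hfa f] at this
    exact this

end MainAux

/-- if Y is a reflexive closed ideal of X and the quotient Banach
lattice X/Y is LWCG, then X is LWCG. The quotient is represented by any Banach
lattice Z together with a surjective lattice homomorphism q : X → Z with kernel Y. -/
theorem LWCG_of_quotient_LWCG_of_reflexive_ideal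
    {X Z : Type*} [NormedAddCommGroup X] [Lattice X] [HasSolidNorm X] [IsOrderedAddMonoid X] [NormedSpace ℝ X] [CompleteSpace X]
    [NormedAddCommGroup Z] [Lattice Z] [HasSolidNorm Z] [IsOrderedAddMonoid Z] [NormedSpace ℝ Z] [CompleteSpace Z]
    (q : X →L[ℝ] Z) (hlat : ∀ x y : X, q (x ⊔ y) = q x ⊔ q y)
    (hq : Function.Surjective q)
    (hideal : ∀ x y : X, y ∈ LinearMap.ker (q : X →ₗ[ℝ] Z) → |x| ≤ |y| → x ∈ LinearMap.ker (q : X →ₗ[ℝ] Z))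
    (hrefl : Function.Surjective (NormedSpace.inclusionInDoubleDual ℝ ↥(LinearMap.ker (q : X →ₗ[ℝ] Z))))
    (hZ : ∃ K : Set Z, WeaklyCompact K ∧ sublatticeGen K = Set.univ) :
    ∃ K : Set X, WeaklyCompact K ∧ sublatticeGen K = Set.univ := by
  classical
  obtain ⟨K, hKc, hKgen⟩ := hZ
  obtain ⟨rK, hrKpos, hrK⟩ := weaklyCompact_bddAux K hKc
  obtain ⟨C, hCpos, hC⟩ := q.exists_preimage_norm_le hq
  set r : ℝ := max (C * rK) 1 with hrdef
  have hr0 : (0 : ℝ) ≤ r := le_trans zero_le_one (le_max_right _ _)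
  have hr1 : (1 : ℝ) ≤ r := le_max_right _ _
  set K' : Set Z := K ∪ {0} with hK'def
  have hK'c : IsCompact (toWeakSpace ℝ Z '' K') := by
    rw [Set.image_union]
    exact hKc.union (by simpa [Set.image_singleton] using
      (isCompact_singleton (x := toWeakSpace ℝ Z 0)))
  set A : Set X := q ⁻¹' K' ∩ Metric.closedBall 0 r with hAdef
  have hAc : WeaklyCompact A := preimage_weaklyCompactAux q hq hrefl hK'c hr0
  refine ⟨A, hAc, ?_⟩
  set T : Set X := sublatticeGen A with hTdef
  have hlatT : IsClosedSublattice T := sublatticeGen_isClosedSublattice A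
  have hAT : A ⊆ T := subset_sublatticeGen A
  -- the kernel is inside T
  have hYT : ∀ v ∈ LinearMap.ker (q : X →ₗ[ℝ] Z), v ∈ T := by
    intro v hv
    rcases eq_or_ne v 0 with rfl | hne
    · exact hlatT.2.1
    have hvpos : (0 : ℝ) < ‖v‖ := norm_pos_iff.mpr hne
    set w : X := ‖v‖⁻¹ • v with hwdef
    have hwA : w ∈ A := by
      constructor
      · show q w ∈ K'
        have : q w = ‖v‖⁻¹ • q v := by rw [hwdef, map_smul]
        rw [this, (by exact LinearMap.mem_ker.mp hv : q v = 0), smul_zero]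
        exact Set.mem_union_right _ rfl
      · have : ‖w‖ = 1 := by
          rw [hwdef, norm_smul, norm_inv, norm_norm, inv_mul_cancel₀ (ne_of_gt hvpos)]
        simp [Metric.mem_closedBall, dist_zero_right, this, hr1]
    have : ‖v‖ • w ∈ T := hlatT.2.2.2.1 ‖v‖ w (hAT hwA)
    rwa [hwdef, smul_inv_smul₀ (ne_of_gt hvpos)] at this
  -- T is saturated
  have hTsat : ∀ x t : X, t ∈ T → q x = q t → x ∈ T := by
    intro x t ht hqq
    have hxt : x - t ∈ LinearMap.ker (q : X →ₗ[ℝ] Z) := by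
      simp [LinearMap.mem_ker, map_sub, hqq]
    have := hlatT.2.2.1 t ht (x - t) (hYT _ hxt)
    simpa using this
  -- the image of T is closed
  have hclosed : IsClosed (q '' T) := by
    have hcompl : (q '' T)ᶜ = q '' Tᶜ := by
      ext z
      constructor
      · intro hz
        obtain ⟨x, rfl⟩ := hq z
        exact ⟨x, fun hxT => hz ⟨x, hxT, rfl⟩, rfl⟩
      · rintro ⟨x, hx, rfl⟩ ⟨t, ht, hqt⟩
        exact hx (hTsat x t ht hqt.symm)
    rw [← isOpen_compl_iff, hcompl]
    exact (ContinuousLinearMap.isOpenMap q hq) _ hlatT.1.isOpen_compl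
  -- inf is preserved by q
  have hinf : ∀ x y : X, q (x ⊓ y) = q x ⊓ q y := by
    intro x y
    have h1 : x ⊓ y = -(-x ⊔ -y) := by rw [neg_sup, neg_neg, neg_neg]
    rw [h1, map_neg, hlat, map_neg, map_neg, neg_sup, neg_neg, neg_neg]
  -- the image of T is a closed sublattice
  have hsubl : IsClosedSublattice (q '' T) := by
    refine ⟨hclosed, ⟨0, hlatT.2.1, map_zero q⟩, ?_, ?_, ?_, ?_⟩
    · rintro _ ⟨x, hx, rfl⟩ _ ⟨y, hy, rfl⟩
      exact ⟨x + y, hlatT.2.2.1 x hx y hy, map_add q x y⟩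
    · rintro c _ ⟨x, hx, rfl⟩
      exact ⟨c • x, hlatT.2.2.2.1 c x hx, map_smul q c x⟩
    · rintro _ ⟨x, hx, rfl⟩ _ ⟨y, hy, rfl⟩
      exact ⟨x ⊔ y, hlatT.2.2.2.2.1 x hx y hy, hlat x y⟩
    · rintro _ ⟨x, hx, rfl⟩ _ ⟨y, hy, rfl⟩
      exact ⟨x ⊓ y, hlatT.2.2.2.2.2 x hx y hy, hinf x y⟩
  -- K is contained in the image of T
  have hKsub : K ⊆ q '' T := by
    intro z hz
    obtain ⟨x, hx, hxn⟩ := hC z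
    have hxA : x ∈ A := by
      constructor
      · show q x ∈ K'
        rw [hx]; exact Set.mem_union_left _ hz
      · have : ‖x‖ ≤ r := by
          calc ‖x‖ ≤ C * ‖z‖ := hxn
            _ ≤ C * rK := mul_le_mul_of_nonneg_left (hrK z hz) (le_of_lt hCpos)
            _ ≤ r := le_max_left _ _
        simpa [Metric.mem_closedBall, dist_zero_right] using this
    exact ⟨x, hAT hxA, hx⟩
  have huniv : q '' T = Set.univ := by
    have : sublatticeGen K ⊆ q '' T := sublatticeGen_subset hsubl hKsub
    rw [hKgen] at this
    exact Set.eq_univ_of_univ_subset this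
  apply Set.eq_univ_of_forall
  intro x
  have : q x ∈ q '' T := huniv ▸ Set.mem_univ (q x)
  obtain ⟨t, ht, hqt⟩ := this
  exact hTsat x t ht hqt.symm
end
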